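/- With the hypotheses of the previous isomorphism, if each G_n carries the discrete topology and both Π_{G_n}K_n and lim← G_n ⊆ Π G_n carry the product (subspace) topology, then ψ(k_1,k_2,...) = (k_1, k_1k_2, ...) is a homeomorphism. -/

import Mathlib

/-- With the hypotheses of the twisted-product/inverse-limit isomorphism, if the ambient
group is discrete and both the twisted product `Π K n` and the inverse limit
`lim← Gs n ⊆ Π Gs n` carry the product (subspace) topology, then
`Ψ(k₀,k₁,…) = (k₀, k₀k₁, …)` is a homeomorphism. -/
theorem twisted_product_homeomorph_inverse_limit
    (A : Type*) [Group A] [TopologicalSpace A] [DiscreteTopology A]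
    (Gs : ℕ → Subgroup A)
    (h0 : Gs 0 = ⊥) (hmono : Monotone Gs)
    (ψ : ℕ → A → A)
    (hmap : ∀ n, ∀ g ∈ Gs (n + 1), ψ n g ∈ Gs n)
    (hmul : ∀ n, ∀ g ∈ Gs (n + 1), ∀ h ∈ Gs (n + 1), ψ n (g * h) = ψ n g * ψ n h)
    (hsurj : ∀ n, ∀ h ∈ Gs n, ∃ g ∈ Gs (n + 1), ψ n g = h)
    (hid : ∀ n, ∀ g ∈ Gs n, ψ n g = g) :
    ∀ K : ℕ → Set A, (∀ n, K n = {g | g ∈ Gs (n + 1) ∧ ψ n g = 1}) →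
    ∀ S : Set (ℕ → A), S = {x | ∀ n, x n ∈ K n} →
    ∀ L : Set (ℕ → A),
      L = {g | (∀ n, g n ∈ Gs (n + 1)) ∧ ∀ n, ψ (n + 1) (g (n + 1)) = g n} →
    ∀ Ψ : (ℕ → A) → ℕ → A, (∀ x n, Ψ x n = ((List.range (n + 1)).map x).prod) →
      ∃ h : {x : ℕ → A // x ∈ S} ≃ₜ {g : ℕ → A // g ∈ L},
        ∀ x : {x : ℕ → A // x ∈ S}, (h x : ℕ → A) = Ψ (x : ℕ → A) := by
  intro K hK S hS L hL Ψ hΨ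
  subst hS hL
  have hψ1 : ∀ n, ψ n 1 = 1 := fun n => hid n 1 (one_mem _)
  have hψinv : ∀ n a, a ∈ Gs (n + 1) → ψ n a⁻¹ = (ψ n a)⁻¹ := by
    intro n a ha
    have h := hmul n a ha a⁻¹ (inv_mem ha)
    rw [mul_inv_cancel, hψ1] at h
    exact eq_inv_of_mul_eq_one_right h.symm
  have hΨ0 : ∀ x : ℕ → A, Ψ x 0 = x 0 := by intro x; rw [hΨ]; simp [List.range_succ]
  have hΨs : ∀ (x : ℕ → A) n, Ψ x (n + 1) = Ψ x n * x (n + 1) := by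
    intro x n
    rw [hΨ, hΨ, List.range_succ, List.map_append, List.prod_append]
    simp
  have hmemS : ∀ x : ℕ → A, (∀ n, x n ∈ K n) →
      ∀ n, x n ∈ Gs (n + 1) ∧ ψ n (x n) = 1 := by
    intro x hx n; have h := hx n; rwa [hK] at h
  have hΨmem : ∀ x : ℕ → A, (∀ n, x n ∈ K n) → ∀ n, Ψ x n ∈ Gs (n + 1) := by
    intro x hx n
    induction n with
    | zero => rw [hΨ0]; exact (hmemS x hx 0).1
    | succ m ih =>
      rw [hΨs]
      exact mul_mem (hmono (Nat.le_succ _) ih) (hmemS x hx (m + 1)).1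
  have hΨL : ∀ x : ℕ → A, (∀ n, x n ∈ K n) →
      (∀ n, Ψ x n ∈ Gs (n + 1)) ∧ ∀ n, ψ (n + 1) (Ψ x (n + 1)) = Ψ x n := by
    intro x hx
    refine ⟨hΨmem x hx, fun n => ?_⟩
    rw [hΨs,
      hmul (n + 1) _ (hmono (Nat.le_succ _) (hΨmem x hx n)) _ (hmemS x hx (n + 1)).1,
      hid (n + 1) _ (hΨmem x hx n), (hmemS x hx (n + 1)).2, mul_one]
  set Φ : (ℕ → A) → ℕ → A :=
    fun g n => Nat.casesOn n (g 0) (fun m => (g m)⁻¹ * g (m + 1)) with hΦ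
  have hΦS : ∀ g : ℕ → A, (∀ n, g n ∈ Gs (n + 1)) →
      (∀ n, ψ (n + 1) (g (n + 1)) = g n) → ∀ n, Φ g n ∈ K n := by
    intro g hg1 hg2 n
    rw [hK]
    cases n with
    | zero =>
      refine ⟨hg1 0, ?_⟩
      have h := hmap 0 (g 0) (hg1 0)
      rw [h0] at h
      show ψ 0 (g 0) = 1
      simpa using h
    | succ m =>
      refine ⟨mul_mem (inv_mem (hmono (Nat.le_succ _) (hg1 m))) (hg1 (m + 1)), ?_⟩
      show ψ (m + 1) ((g m)⁻¹ * g (m + 1)) = 1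
      rw [hmul (m + 1) _ (inv_mem (hmono (Nat.le_succ _) (hg1 m))) _ (hg1 (m + 1)),
        hψinv (m + 1) _ (hmono (Nat.le_succ _) (hg1 m)),
        hid (m + 1) _ (hg1 m), hg2 m, inv_mul_cancel]
  have hΦΨ : ∀ x : ℕ → A, Φ (Ψ x) = x := by
    intro x; funext n
    cases n with
    | zero => show Ψ x 0 = x 0; exact hΨ0 x
    | succ m =>
      show (Ψ x m)⁻¹ * Ψ x (m + 1) = x (m + 1)
      rw [hΨs]; group
  have hΨΦ : ∀ g : ℕ → A, Ψ (Φ g) = g := by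
    intro g; funext n
    induction n with
    | zero => exact hΨ0 (Φ g) ▸ rfl
    | succ m ih =>
      rw [hΨs, ih]
      show g m * ((g m)⁻¹ * g (m + 1)) = g (m + 1)
      group
  refine ⟨⟨⟨fun x => ⟨Ψ x.1, hΨL x.1 x.2⟩, fun g => ⟨Φ g.1, hΦS g.1 g.2.1 g.2.2⟩,
    ?_, ?_⟩, ?_, ?_⟩, fun x => rfl⟩
  · intro x; exact Subtype.ext (hΦΨ x.1)
  · intro g; exact Subtype.ext (hΨΦ g.1)
  · refine Continuous.subtype_mk (continuous_pi fun n => ?_) _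
    simp only [hΨ]
    generalize List.range (n + 1) = l
    induction l with
    | nil => simpa using continuous_const
    | cons a t ih =>
      simp only [List.map_cons, List.prod_cons]
      exact ((continuous_apply a).comp continuous_subtype_val).mul ih
  · refine Continuous.subtype_mk (continuous_pi fun n => ?_) _
    cases n with
    | zero => exact (continuous_apply 0).comp continuous_subtype_val
    | succ m =>
      exact (((continuous_apply m).comp continuous_subtype_val).inv).mul
        ((continuous_apply (m + 1)).comp continuous_subtype_val)
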